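/- Let p be an odd prime and let H = A ⋊ ⟨b⟩, where A = {v ∈ 𝔽_p^p : Σvᵢ = 0} and b = (1 2 ... p) acts by cyclic shift. Then the center of H is cyclic of order p, generated by the element of A whose coordinates in the basis c₁, ..., c_{p−1} are (1, 2, ..., p−1). -/

import Mathlib

open Equiv Multiplicative Polynomial

/-- Coordinate-permutation automorphism of the base group. -/
def permAut (p q : ℕ) (σ : Equiv.Perm (Fin q)) :
    MulAut (Fin q → Multiplicative (ZMod p)) where
  toFun v := v ∘ σ.symm
  invFun v := v ∘ σ
  left_inv v := by funext i; simp
  right_inv v := by funext i; simp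
  map_mul' v w := rfl

/-- The action of `Sym(q)` on the base group of the wreath product. -/
def wreathAct (p q : ℕ) :
    Equiv.Perm (Fin q) →* MulAut (Fin q → Multiplicative (ZMod p)) where
  toFun := permAut p q
  map_one' := rfl
  map_mul' σ τ := rfl

/-- The wreath product `C_p ≀ Sym(q)`. -/
abbrev Wreath (p q : ℕ) :=
  (Fin q → Multiplicative (ZMod p)) ⋊[wreathAct p q] Equiv.Perm (Fin q)

/-- The complex reflection group `G(p,p,q)` as a subgroup of `C_p ≀ Sym(q)`. -/
def Gppq (p q : ℕ) : Subgroup (Wreath p q) where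
  carrier := {g | ∑ i, Multiplicative.toAdd (g.left i) = 0}
  one_mem' := by simp
  mul_mem' := by
    intro a b ha hb
    simp only [Set.mem_setOf_eq, SemidirectProduct.mul_left] at *
    have : ∑ i, toAdd ((wreathAct p q a.right b.left) i) = 0 := by
      have := Equiv.sum_comp a.right.symm (fun i => toAdd (b.left i))
      change ∑ i, toAdd (b.left (a.right.symm i)) = 0
      exact this.trans hb
    simp [Pi.mul_apply, toAdd_mul, Finset.sum_add_distrib, ha, this]
  inv_mem' := by
    intro a ha
    simp only [Set.mem_setOf_eq, SemidirectProduct.inv_left] at *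
    have h := Equiv.sum_comp a.right (fun i => toAdd (a.left⁻¹ i))
    have h2 : ∑ i, toAdd (a.left⁻¹ i) = 0 := by
      simp [toAdd_inv, Finset.sum_neg_distrib, ha]
    simp only [wreathAct, permAut, map_inv]
    change ∑ i, toAdd (a.left⁻¹ (a.right i)) = 0
    exact h.trans h2


/-- The subgroup `H = A ⋊ ⟨b⟩` of the wreath product, where `b` is the cyclic
shift `(1 2 … q)`. -/
def Hgrp (p q : ℕ) : Subgroup (Wreath p q) where
  carrier := {g | ∑ i, Multiplicative.toAdd (g.left i) = 0 ∧
    g.right ∈ Subgroup.zpowers (finRotate q)}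
  one_mem' := ⟨(Gppq p q).one_mem, Subgroup.one_mem _⟩
  mul_mem' := by
    intro a b ha hb
    exact ⟨(Gppq p q).mul_mem ha.1 hb.1, by
      simpa using Subgroup.mul_mem _ ha.2 hb.2⟩
  inv_mem' := by
    intro a ha
    exact ⟨(Gppq p q).inv_mem ha.1, by simpa using Subgroup.inv_mem _ ha.2⟩


lemma mem_Hgrp (p q : ℕ) (x : Wreath p q) :
    x ∈ Hgrp p q ↔ (∑ i, Multiplicative.toAdd (x.left i) = 0 ∧
      x.right ∈ Subgroup.zpowers (finRotate q)) := Iff.rfl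

lemma wreathAct_apply (p q : ℕ) (σ : Equiv.Perm (Fin q)) (v : Fin q → Multiplicative (ZMod p)) :
    wreathAct p q σ v = v ∘ σ.symm := rfl

lemma const_mem_Hgrp (p : ℕ) (c : ZMod p) [NeZero p] :
    (SemidirectProduct.inl (fun _ : Fin p => Multiplicative.ofAdd c) : Wreath p p) ∈ Hgrp p p := by
  rw [mem_Hgrp]
  constructor
  · simp [Finset.sum_const, Fintype.card_fin, nsmul_eq_mul, ZMod.natCast_self]
  · simp [Subgroup.one_mem]

open Fin.NatCast in
lemma finRotate_pow_apply (n k : ℕ) (i : Fin (n+1)) :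
    ((finRotate (n+1))^k) i = i + (k : Fin (n+1)) := by
  induction k with
  | zero => simp
  | succ k ih =>
    rw [pow_succ', Equiv.Perm.mul_apply, ih, finRotate_succ_apply, Nat.cast_add, Nat.cast_one,
      ← add_assoc]

open Fin.NatCast in
lemma const_of_shift {α : Type*} (n : ℕ) (f : Fin (n+1) → α)
    (h : ∀ j, f ((finRotate (n+1)).symm j) = f j) : ∀ i, f i = f 0 := by
  have h' : ∀ i, f (i + 1) = f i := by
    intro i
    have := h (i + 1)
    rw [show (finRotate (n+1)).symm (i+1) = i by
      apply (finRotate (n+1)).injective; simp] at this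
    exact this.symm
  have key : ∀ k : ℕ, f (k : Fin (n+1)) = f 0 := by
    intro k
    induction k with
    | zero => norm_num
    | succ k ih =>
      have hcast : ((k+1:ℕ) : Fin (n+1)) = (k : Fin (n+1)) + 1 := by push_cast; ring
      rw [hcast, h', ih]
  intro i
  have := key i.val
  rwa [Fin.cast_val_eq_self] at this

open Fin.NatCast in
lemma center_iff (p : ℕ) (hp : p.Prime) (hop : Odd p) (g : ↥(Hgrp p p)) :
    g ∈ Subgroup.center ↥(Hgrp p p) ↔
      ∃ c : ZMod p, (g : Wreath p p) =
        SemidirectProduct.inl (fun _ : Fin p => Multiplicative.ofAdd c) := by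
  haveI : NeZero p := ⟨hp.ne_zero⟩
  constructor
  · intro hg
    have hcomm := Subgroup.mem_center_iff.mp hg
    -- the rotation element
    have hβmem : (⟨1, finRotate p⟩ : Wreath p p) ∈ Hgrp p p := by
      rw [mem_Hgrp]
      exact ⟨by simp, Subgroup.mem_zpowers _⟩
    set β : ↥(Hgrp p p) := ⟨⟨1, finRotate p⟩, hβmem⟩ with hβ
    have h1 := congrArg (fun x : ↥(Hgrp p p) => (x : Wreath p p).left) (hcomm β)
    simp only [Subgroup.coe_mul, SemidirectProduct.mul_left, hβ] at h1
    -- h1 : 1 * wreathAct p p (finRotate p) g.val.left = g.val.left * wreathAct p p g.val.right 1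
    rw [one_mul, map_one, mul_one, wreathAct_apply] at h1
    -- g.left is constant
    obtain ⟨n, rfl⟩ := Nat.exists_eq_succ_of_ne_zero hp.ne_zero
    have hconst : ∀ i, (g : Wreath (n+1) (n+1)).left i = (g : Wreath (n+1) (n+1)).left 0 := by
      apply const_of_shift
      intro j
      exact congrFun h1 j
    -- g.right = 1
    have hσ := g.2.2
    obtain ⟨k, hk⟩ := (isOfFinOrder_of_finite (finRotate (n+1))).mem_powers_iff_mem_zpowers.mpr hσ
    have hk' : finRotate (n+1) ^ k = (g : Wreath (n+1) (n+1)).right := hk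
    haveI := Fact.mk hp
    set w : Fin (n+1) → ZMod (n+1) :=
      fun j => (if j = 0 then (1 : ZMod (n+1)) else 0) - (if j = 1 then 1 else 0) with hw
    have hwmem : (⟨fun j => Multiplicative.ofAdd (w j), 1⟩ : Wreath (n+1) (n+1)) ∈
        Hgrp (n+1) (n+1) := by
      rw [mem_Hgrp]
      constructor
      · simp [hw, Finset.sum_sub_distrib, Finset.sum_ite_eq']
      · exact Subgroup.one_mem _
    have h2 := congrArg (fun x : ↥(Hgrp (n+1) (n+1)) => (x : Wreath (n+1) (n+1)).left)
      (hcomm ⟨⟨fun j => Multiplicative.ofAdd (w j), 1⟩, hwmem⟩)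
    simp only [Subgroup.coe_mul, SemidirectProduct.mul_left, map_one, MulAut.one_apply,
      mul_one, one_mul, wreathAct_apply] at h2
    have h3 : (fun j => Multiplicative.ofAdd (w j)) =
        (fun j => Multiplicative.ofAdd (w j)) ∘ ((g : Wreath (n+1) (n+1)).right).symm := by
      apply mul_left_cancel (a := (g : Wreath (n+1) (n+1)).left)
      rw [mul_comm ((g : Wreath (n+1) (n+1)).left) (fun j => Multiplicative.ofAdd (w j))]
      exact h2
    have h4 := congrFun h3 ((g : Wreath (n+1) (n+1)).right 0)
    simp only [Function.comp_apply, Equiv.symm_apply_apply] at h4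
    -- h4 : ofAdd (w (σ 0)) = ofAdd (w 0)
    have h5 : w ((g : Wreath (n+1) (n+1)).right 0) = w 0 := ofAdd.injective h4
    have hw0 : w 0 = 1 := by
      have h01 : (0 : Fin (n+1)) ≠ 1 := by
        have : (1:ℕ) < n+1 := hp.one_lt
        simp [Fin.ext_iff, Fin.val_one, Nat.mod_eq_of_lt this]
      simp [hw, h01]
    have hσ0 : (g : Wreath (n+1) (n+1)).right 0 = 0 := by
      by_contra hne
      rw [hw0] at h5
      simp only [hw] at h5
      rw [if_neg hne] at h5
      have h2ne : (2 : ZMod (n+1)) ≠ 0 := by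
        intro habs
        have hdvd : (n+1) ∣ 2 :=
          (ZMod.natCast_eq_zero_iff 2 (n+1)).mp (by exact_mod_cast habs)
        have hle := Nat.le_of_dvd (by norm_num) hdvd
        have h2le := hp.two_le
        have hodd := Nat.odd_iff.mp hop
        omega
      by_cases h1' : (g : Wreath (n+1) (n+1)).right 0 = 1
      · rw [if_pos h1'] at h5
        exact h2ne (by linear_combination -h5)
      · rw [if_neg h1', sub_zero] at h5
        exact one_ne_zero h5.symm
    have hright : (g : Wreath (n+1) (n+1)).right = 1 := by
      rw [← hk'] at hσ0 ⊢
      rw [finRotate_pow_apply, zero_add] at hσ0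
      have hdvd : (n+1) ∣ k := Fin.natCast_eq_zero.mp hσ0
      obtain ⟨m, rfl⟩ := hdvd
      have hord : (finRotate (n+1)) ^ (n+1) = 1 := by
        apply Equiv.ext
        intro i
        rw [finRotate_pow_apply]
        simp
      rw [pow_mul, hord, one_pow]
    refine ⟨Multiplicative.toAdd ((g : Wreath (n+1) (n+1)).left 0), ?_⟩
    apply SemidirectProduct.ext
    · funext i
      simp only [SemidirectProduct.left_inl]
      rw [hconst i, ofAdd_toAdd]
    · rw [hright]
      simp
  · intro ⟨c, hc⟩
    rw [Subgroup.mem_center_iff]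
    intro h
    apply Subtype.ext
    apply SemidirectProduct.ext
    · show ((h : Wreath p p) * g).left = ((g : Wreath p p) * h).left
      rw [hc]
      simp only [SemidirectProduct.mul_left, SemidirectProduct.left_inl, wreathAct_apply]
      rw [mul_comm]
      rfl
    · show ((h : Wreath p p) * g).right = ((g : Wreath p p) * h).right
      rw [hc]
      simp [SemidirectProduct.mul_right]
lemma zcalc (p : ℕ) (hp : p.Prime)
    (z : Fin p → ZMod p)
    (hz : z = ∑ k ∈ Finset.range (p - 1), ((k + 1 : ℕ) : ZMod p) •
      (fun j : Fin p => if (j : ℕ) = k then (1 : ZMod p)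
        else if (j : ℕ) = k + 1 then -1 else 0)) :
    z = fun _ => (1 : ZMod p) := by
  funext j
  have hp1 : p - 1 + 1 = p := Nat.succ_pred_eq_of_pos hp.pos
  rw [hz]
  simp only [Finset.sum_apply, Pi.smul_apply, smul_eq_mul]
  have step : ∀ k ∈ Finset.range (p-1),
      ((k + 1 : ℕ) : ZMod p) * (if (j : ℕ) = k then (1 : ZMod p)
        else if (j : ℕ) = k + 1 then -1 else 0)
      = (if (j:ℕ) = k then ((k+1:ℕ) : ZMod p) else 0)
        - (if (j:ℕ) = k + 1 then ((k+1:ℕ) : ZMod p) else 0) := by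
    intro k _
    by_cases h1 : (j:ℕ) = k
    · have h2 : ¬ (j:ℕ) = k + 1 := by omega
      simp [h1, h2]
    · by_cases h2 : (j:ℕ) = k + 1 <;> simp [h1, h2]
  rw [Finset.sum_congr rfl step, Finset.sum_sub_distrib]
  have S1 : (∑ k ∈ Finset.range (p-1), if (j:ℕ) = k then ((k+1:ℕ) : ZMod p) else 0)
      = if (j:ℕ) ∈ Finset.range (p-1) then (((j:ℕ)+1 : ℕ) : ZMod p) else 0 :=
    Finset.sum_ite_eq (Finset.range (p-1)) (j:ℕ) _
  have S2 : (∑ k ∈ Finset.range (p-1), if (j:ℕ) = k + 1 then ((k+1:ℕ) : ZMod p) else 0)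
      = ((j:ℕ) : ZMod p) := by
    have := Finset.sum_range_succ' (fun m => if (j:ℕ) = m then ((m:ℕ) : ZMod p) else 0) (p-1)
    rw [hp1] at this
    have S2' : (∑ m ∈ Finset.range p, if (j:ℕ) = m then ((m:ℕ) : ZMod p) else 0)
        = ((j:ℕ) : ZMod p) := by
      rw [Finset.sum_ite_eq (Finset.range p) (j:ℕ) _, if_pos (Finset.mem_range.mpr j.isLt)]
    rw [S2'] at this
    simpa using this.symm
  rw [S1, S2]
  by_cases hjr : (j:ℕ) ∈ Finset.range (p-1)
  · rw [if_pos hjr]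
    push_cast
    ring
  · rw [if_neg hjr]
    have hj : (j:ℕ) = p - 1 := by
      simp only [Finset.mem_range, not_lt] at hjr
      have := j.isLt
      omega
    rw [hj, Nat.cast_sub hp.one_le, ZMod.natCast_self]
    simp

theorem stmt16 (p : ℕ) (hp : p.Prime) (hop : Odd p) :
    let z : Fin p → ZMod p := ∑ k ∈ Finset.range (p - 1), ((k + 1 : ℕ) : ZMod p) •
      (fun j : Fin p => if (j : ℕ) = k then (1 : ZMod p)
        else if (j : ℕ) = k + 1 then -1 else 0)
    let zw : Wreath p p := SemidirectProduct.inl (fun i => Multiplicative.ofAdd (z i))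
    Nat.card (Subgroup.center ↥(Hgrp p p)) = p ∧
      IsCyclic ↥(Subgroup.center ↥(Hgrp p p)) ∧
      (Subgroup.center ↥(Hgrp p p)).map (Hgrp p p).subtype =
        Subgroup.zpowers zw := by
  intro z zw
  haveI hfact : Fact p.Prime := ⟨hp⟩
  haveI : NeZero p := ⟨hp.ne_zero⟩
  have hz : z = fun _ => (1 : ZMod p) := zcalc p hp z rfl
  have hzw : zw = SemidirectProduct.inl (fun _ : Fin p => Multiplicative.ofAdd (1 : ZMod p)) := by
    show SemidirectProduct.inl (fun i => Multiplicative.ofAdd (z i)) = _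
    rw [hz]
  have hpow : ∀ m : ℕ, zw ^ m =
      SemidirectProduct.inl (fun _ : Fin p => Multiplicative.ofAdd ((m : ZMod p))) := by
    intro m
    rw [hzw, ← map_pow]
    congr 1
    funext i
    rw [Pi.pow_apply, ← ofAdd_nsmul, nsmul_eq_mul, mul_one]
  have hzwp : zw ^ p = 1 := by
    rw [hpow p, ZMod.natCast_self, ofAdd_zero]
    exact map_one _
  have hzw1 : zw ≠ 1 := by
    intro habs
    have := congrArg (fun x : Wreath p p => Multiplicative.toAdd (x.left 0)) habs
    simp only [hzw, SemidirectProduct.left_inl, SemidirectProduct.one_left, toAdd_ofAdd,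
      Pi.one_apply, toAdd_one] at this
    exact one_ne_zero this
  have hmap : (Subgroup.center ↥(Hgrp p p)).map (Hgrp p p).subtype = Subgroup.zpowers zw := by
    ext x
    constructor
    · intro hx
      obtain ⟨g, hg, hgx⟩ := Subgroup.mem_map.mp hx
      obtain ⟨c, hc⟩ := (center_iff p hp hop g).mp hg
      refine ⟨(c.val : ℤ), ?_⟩
      show zw ^ ((c.val : ℕ) : ℤ) = x
      rw [zpow_natCast, hpow c.val, ← hgx]
      simp only [Subgroup.coe_subtype, hc, ZMod.natCast_val, ZMod.cast_id]
    · intro hx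
      have hfin : IsOfFinOrder zw := isOfFinOrder_iff_pow_eq_one.mpr ⟨p, hp.pos, hzwp⟩
      obtain ⟨m, hm⟩ := hfin.mem_powers_iff_mem_zpowers.mpr hx
      have hm' : zw ^ m = x := hm
      refine Subgroup.mem_map.mpr
        ⟨⟨SemidirectProduct.inl (fun _ : Fin p => Multiplicative.ofAdd ((m : ZMod p))),
          const_mem_Hgrp p _⟩, (center_iff p hp hop _).mpr ⟨(m : ZMod p), rfl⟩, ?_⟩
      rw [← hm', hpow m]
      rfl
  have hcard : Nat.card (Subgroup.center ↥(Hgrp p p)) = p := by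
    have e := Subgroup.equivMapOfInjective (Subgroup.center ↥(Hgrp p p)) (Hgrp p p).subtype
      (Subgroup.subtype_injective _)
    rw [Nat.card_congr e.toEquiv, hmap, Nat.card_zpowers, orderOf_eq_prime hzwp hzw1]
  exact ⟨hcard, isCyclic_of_prime_card hcard, hmap⟩
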